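/- If M is a closed subset of Euclidean n-space contained in the bounding voxel V₀ and M has Lebesgue measure zero, then the Lebesgue measures of the subdivision approximations tend to zero: the sequence t ↦ volume(C_t(M)) tends to 0 as t → ∞. -/

import Mathlib

open Set Metric Filter MeasureTheory ENNReal

noncomputable section

variable {n : ℕ}

/-- The bounding voxel `V₀ = {x | ∀ i, a i ≤ x i ∧ x i < b i}`. -/
def boundingVoxel (a b : EuclideanSpace ℝ (Fin n)) : Set (EuclideanSpace ℝ (Fin n)) :=
  {x | ∀ i, a i ≤ x i ∧ x i < b i}

/-- The level-`t` dyadic sub-voxel `D_t(k)`. -/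
def subVoxel (a b : EuclideanSpace ℝ (Fin n)) (t : ℕ) (k : Fin n → ℕ) :
    Set (EuclideanSpace ℝ (Fin n)) :=
  {x | ∀ i, a i + (k i : ℝ) * (b i - a i) / 2 ^ t ≤ x i ∧
            x i < a i + ((k i : ℝ) + 1) * (b i - a i) / 2 ^ t}

/-- The retained indices `Q_t(M)`: admissible `k` whose closed sub-voxel meets `M`. -/
def retained (a b : EuclideanSpace ℝ (Fin n)) (t : ℕ) (M : Set (EuclideanSpace ℝ (Fin n))) :
    Set (Fin n → ℕ) :=
  {k | (∀ i, k i < 2 ^ t) ∧ (closure (subVoxel a b t k) ∩ M).Nonempty}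

/-- The level-`t` approximation `C_t(M)`: union of the closures of retained sub-voxels. -/
def approx (a b : EuclideanSpace ℝ (Fin n)) (t : ℕ) (M : Set (EuclideanSpace ℝ (Fin n))) :
    Set (EuclideanSpace ℝ (Fin n)) :=
  ⋃ k ∈ retained a b t M, closure (subVoxel a b t k)

/-- for closed `M ⊆ V₀` of Lebesgue measure zero, the volumes of the
approximations `C_t(M)` tend to zero. -/
theorem tendsto_volume_approx
    (n : ℕ) (hn : 1 ≤ n) (a b : EuclideanSpace ℝ (Fin n)) (hab : ∀ i, a i < b i)
    (M : Set (EuclideanSpace ℝ (Fin n))) (hMc : IsClosed M)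
    (hM : M ⊆ boundingVoxel a b) (hvol : volume M = 0) :
    Filter.Tendsto (fun t : ℕ => volume (approx a b t M)) Filter.atTop (nhds 0) := by
  set d : ℝ := Real.sqrt (∑ i, (b i - a i) ^ 2) with hd
  have hS : (0:ℝ) ≤ ∑ i, (b i - a i) ^ 2 := Finset.sum_nonneg fun i _ => sq_nonneg _
  -- closure of each subVoxel is contained in a closed box of side lengths (b i - a i)/2^t
  have hbox : ∀ (t : ℕ) (k : Fin n → ℕ), closure (subVoxel a b t k) ⊆
      {x : EuclideanSpace ℝ (Fin n) | ∀ i,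
        a i + (k i : ℝ) * (b i - a i) / 2 ^ t ≤ x i ∧
        x i ≤ a i + ((k i : ℝ) + 1) * (b i - a i) / 2 ^ t} := by
    intro t k
    apply closure_minimal
    · intro x hx i
      exact ⟨(hx i).1, (hx i).2.le⟩
    · have : IsClosed (⋂ i : Fin n,
          ({x : EuclideanSpace ℝ (Fin n) | a i + (k i : ℝ) * (b i - a i) / 2 ^ t ≤ x i} ∩
           {x | x i ≤ a i + ((k i : ℝ) + 1) * (b i - a i) / 2 ^ t})) := by
        apply isClosed_iInter
        intro i
        exact (isClosed_le continuous_const (EuclideanSpace.proj i).continuous).inter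
          (isClosed_le (EuclideanSpace.proj i).continuous continuous_const)
      convert this using 1
      ext x
      simp [Set.mem_iInter, forall_and]
  -- distance bound within a sub-voxel closure
  have hdist : ∀ (t : ℕ) (k : Fin n → ℕ) (x y : EuclideanSpace ℝ (Fin n)),
      x ∈ closure (subVoxel a b t k) → y ∈ closure (subVoxel a b t k) →
      dist x y ≤ d / 2 ^ t := by
    intro t k x y hx hy
    have hx' := hbox t k hx
    have hy' := hbox t k hy
    rw [EuclideanSpace.dist_eq]
    have h1 : (∑ i, dist (x i) (y i) ^ 2) ≤ ∑ i, ((b i - a i) / 2 ^ t) ^ 2 := by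
      apply Finset.sum_le_sum
      intro i _
      have hxi := hx' i
      have hyi := hy' i
      have key : a i + ((k i : ℝ) + 1) * (b i - a i) / 2 ^ t
          - (a i + (k i : ℝ) * (b i - a i) / 2 ^ t) = (b i - a i) / 2 ^ t := by
        field_simp
        ring
      have : dist (x i) (y i) ≤ (b i - a i) / 2 ^ t := by
        rw [Real.dist_eq, abs_sub_le_iff]
        constructor <;> linarith [hxi.1, hxi.2, hyi.1, hyi.2]
      have hnn : (0:ℝ) ≤ dist (x i) (y i) := dist_nonneg
      nlinarith
    calc Real.sqrt (∑ i, dist (x i) (y i) ^ 2)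
        ≤ Real.sqrt (∑ i, ((b i - a i) / 2 ^ t) ^ 2) := Real.sqrt_le_sqrt h1
      _ = d / 2 ^ t := by
          have : (∑ i, ((b i - a i) / 2 ^ t) ^ 2)
              = (∑ i, (b i - a i) ^ 2) * ((2:ℝ) ^ t)⁻¹ ^ 2 := by
            rw [Finset.sum_mul]
            congr 1; ext i; ring
          rw [this, Real.sqrt_mul hS, Real.sqrt_sq (by positivity), hd]
          ring
  -- approx is contained in the cthickening of M
  have happrox : ∀ t : ℕ, approx a b t M ⊆ Metric.cthickening (d / 2 ^ t) M := by
    intro t x hx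
    rcases Set.mem_iUnion₂.1 hx with ⟨k, hk, hxk⟩
    obtain ⟨y, hyc, hyM⟩ := hk.2
    exact Metric.mem_cthickening_of_dist_le x y _ _ hyM (hdist t k x y hxk hyc)
  -- M is bounded, so cthickenings have finite measure
  have hMbdd : Bornology.IsBounded M := by
    apply Bornology.IsBounded.subset _ hM
    have : boundingVoxel a b ⊆ {x : EuclideanSpace ℝ (Fin n) | ∀ i, a i ≤ x i ∧ x i ≤ b i} :=
      fun x hx i => ⟨(hx i).1, (hx i).2.le⟩
    apply Bornology.IsBounded.subset _ this
    have : {x : EuclideanSpace ℝ (Fin n) | ∀ i, a i ≤ x i ∧ x i ≤ b i} ⊆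
        Metric.closedBall a (Real.sqrt (∑ i, (b i - a i) ^ 2)) := by
      intro x hx
      rw [Metric.mem_closedBall, EuclideanSpace.dist_eq]
      apply Real.sqrt_le_sqrt
      apply Finset.sum_le_sum
      intro i _
      have := hx i
      have h2 : dist (x i) (a i) ≤ b i - a i := by
        rw [Real.dist_eq, abs_sub_le_iff]
        constructor <;> linarith [this.1, this.2]
      nlinarith [dist_nonneg (x := x i) (y := a i)]
    exact Metric.isBounded_closedBall.subset this
  have hfin : ∃ R > 0, volume (Metric.cthickening R M) ≠ ∞ := by
    refine ⟨1, one_pos, ?_⟩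
    exact (Bornology.IsBounded.measure_lt_top (hMbdd.cthickening)).ne
  have hcth : Tendsto (fun r : ℝ => volume (Metric.cthickening r M)) (nhds 0) (nhds 0) := by
    have := tendsto_measure_cthickening_of_isClosed (μ := volume) hfin hMc
    rwa [hvol] at this
  have hr : Tendsto (fun t : ℕ => d / 2 ^ t) atTop (nhds 0) := by
    have : Tendsto (fun t : ℕ => ((1:ℝ)/2) ^ t) atTop (nhds 0) :=
      tendsto_pow_atTop_nhds_zero_of_lt_one (by norm_num) (by norm_num)
    have h2 := this.const_mul d
    rw [mul_zero] at h2
    convert h2 using 2 with t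
    rw [div_pow, one_pow]
    ring
  have hupper : Tendsto (fun t : ℕ => volume (Metric.cthickening (d / 2 ^ t) M)) atTop (nhds 0) :=
    hcth.comp hr
  exact tendsto_of_tendsto_of_tendsto_of_le_of_le tendsto_const_nhds hupper
    (fun t => zero_le) (fun t => measure_mono (happrox t))
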